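/- Let N ≥ 1 and let P1, P3 be N×N complex matrices with P1 ≠ P3 satisfying (P3−P1)† · (P3−P1) = (‖P3−P1‖_F² / N) · I_N, and let P2, P4 be arbitrary N×N complex matrices. Set M2 = (N / ‖P3−P1‖_F²) · (P3−P1)† · (P3·P4 − P1·P2) and M1 = P1·P2 − P1·M2. Then the block matrix [[I_N, P1],[I_N, P3]] is invertible and [[I_N, P1],[I_N, P3]]^{−1} · G(P1,P2,P3,P4) = [[I_N, 0_N, M1],[0_N, I_N, M2]] · Ā, where the right-hand left factor is the indicated 2N×3N block matrix. -/

import Mathlib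

open Matrix

noncomputable section

/-- Squared Frobenius norm of a complex matrix. -/
def frobSq {m n : ℕ} (X : Matrix (Fin m) (Fin n) ℂ) : ℝ :=
  ∑ i, ∑ j, Complex.normSq (X i j)

/-- The 3N × (3N-1) bidiagonal matrix `Ā` of the paper (0-indexed):
`-1` on the diagonal, `1` on the subdiagonal, zeros elsewhere. -/
def Abar (N : ℕ) : Matrix (Fin (3 * N)) (Fin (3 * N - 1)) ℂ :=
  Matrix.of fun i j =>
    if i.val = j.val then -1 else if i.val = j.val + 1 then 1 else 0

/-- 2N × 3N block matrix `[[A, B, C], [D, E, F]]` built out of N × N blocks. -/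
def blk23 {N : ℕ} (A B C D E F : Matrix (Fin N) (Fin N) ℂ) :
    Matrix (Fin (2 * N)) (Fin (3 * N)) ℂ :=
  Matrix.of fun i j =>
    if hi : i.val < N then
      if hj : j.val < N then A ⟨i.val, hi⟩ ⟨j.val, hj⟩
      else if hj2 : j.val < 2 * N then B ⟨i.val, hi⟩ ⟨j.val - N, by omega⟩
      else C ⟨i.val, hi⟩ ⟨j.val - 2 * N, by have := j.isLt; omega⟩
    else
      if hj : j.val < N then D ⟨i.val - N, by have := i.isLt; omega⟩ ⟨j.val, hj⟩
      else if hj2 : j.val < 2 * N then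
        E ⟨i.val - N, by have := i.isLt; omega⟩ ⟨j.val - N, by omega⟩
      else F ⟨i.val - N, by have := i.isLt; omega⟩ ⟨j.val - 2 * N, by have := j.isLt; omega⟩

/-- 2N × 2N block matrix `[[A, B], [C, D]]` built out of N × N blocks. -/
def blk22 {N : ℕ} (A B C D : Matrix (Fin N) (Fin N) ℂ) :
    Matrix (Fin (2 * N)) (Fin (2 * N)) ℂ :=
  Matrix.of fun i j =>
    if hi : i.val < N then
      if hj : j.val < N then A ⟨i.val, hi⟩ ⟨j.val, hj⟩
      else B ⟨i.val, hi⟩ ⟨j.val - N, by have := j.isLt; omega⟩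
    else
      if hj : j.val < N then C ⟨i.val - N, by have := i.isLt; omega⟩ ⟨j.val, hj⟩
      else D ⟨i.val - N, by have := i.isLt; omega⟩ ⟨j.val - N, by have := j.isLt; omega⟩

/-- The 2N × (3N-1) matrix `G(P1, P2, P3, P4) = [[I, P1, P1·P2], [I, P3, P3·P4]] · Ā`. -/
def Gmat {N : ℕ} (P1 P2 P3 P4 : Matrix (Fin N) (Fin N) ℂ) :
    Matrix (Fin (2 * N)) (Fin (3 * N - 1)) ℂ :=
  blk23 1 P1 (P1 * P2) 1 P3 (P3 * P4) * Abar N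

/-- The 1 × N all-ones row vector `w`. -/
def wrow (N : ℕ) : Matrix (Fin 1) (Fin N) ℂ :=
  Matrix.of fun _ _ => 1

set_option maxHeartbeats 1000000 in
lemma sum_split {N : ℕ} (g : Fin (2*N) → ℂ) :
    ∑ k, g k = (∑ a : Fin N, g ⟨a.1, by omega⟩) + ∑ a : Fin N, g ⟨N + a.1, by omega⟩ := by
  rw [← Equiv.sum_comp (finCongr (two_mul N).symm) g, Fin.sum_univ_add]; rfl

set_option maxHeartbeats 1000000 in
lemma blk22_mul_blk23 {N : ℕ} (A B C D A' B' C' D' E' F' : Matrix (Fin N) (Fin N) ℂ) :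
    blk22 A B C D * blk23 A' B' C' D' E' F' =
      blk23 (A*A'+B*D') (A*B'+B*E') (A*C'+B*F') (C*A'+D*D') (C*B'+D*E') (C*C'+D*F') := by
  ext i j
  rw [Matrix.mul_apply, sum_split]
  have h1 : ∀ a : Fin N, a.val < N := fun a => a.isLt
  have h2 : ∀ a : Fin N, ¬ (N + a.val < N) := fun a => by omega
  have h3 : ∀ a : Fin N, N + a.val < 2 * N := fun a => by have := a.isLt; omega
  by_cases hi : i.val < N <;> by_cases hj : j.val < N <;> by_cases hj2 : j.val < 2*N <;>
    first
    | (exfalso; omega)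
    | simp [blk22, blk23, hi, hj, hj2, h1, h2, h3, Matrix.mul_apply, Matrix.add_apply,
        Nat.add_sub_cancel_left]

set_option maxHeartbeats 1000000 in
lemma blk22_mul_blk22 {N : ℕ} (A B C D A' B' C' D' : Matrix (Fin N) (Fin N) ℂ) :
    blk22 A B C D * blk22 A' B' C' D' =
      blk22 (A*A'+B*C') (A*B'+B*D') (C*A'+D*C') (C*B'+D*D') := by
  ext i j
  rw [Matrix.mul_apply, sum_split]
  have h1 : ∀ a : Fin N, a.val < N := fun a => a.isLt
  have h2 : ∀ a : Fin N, ¬ (N + a.val < N) := fun a => by omega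
  by_cases hi : i.val < N <;> by_cases hj : j.val < N <;>
    simp [blk22, hi, hj, h1, h2, Matrix.mul_apply, Matrix.add_apply, Nat.add_sub_cancel_left]

set_option maxHeartbeats 1000000 in
lemma blk22_one {N : ℕ} : blk22 (1 : Matrix (Fin N) (Fin N) ℂ) 0 0 1 = 1 := by
  ext i j
  by_cases hi : i.val < N <;> by_cases hj : j.val < N <;>
    simp [blk22, hi, hj, Matrix.one_apply, Fin.ext_iff] <;>
    first | omega | (split_ifs <;> first | rfl | (exfalso; omega))

set_option maxHeartbeats 1000000 in
theorem stmt3 (N : ℕ) (hN : 1 ≤ N) (P1 P2 P3 P4 : Matrix (Fin N) (Fin N) ℂ)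
    (hne : P1 ≠ P3)
    (hcond : (P3 - P1)ᴴ * (P3 - P1) = ((frobSq (P3 - P1) / (N : ℝ) : ℝ) : ℂ) • 1) :
    IsUnit (blk22 1 P1 1 P3) ∧
      (blk22 1 P1 1 P3)⁻¹ * Gmat P1 P2 P3 P4 =
        blk23 1 0
            (P1 * P2 -
              P1 * (((N : ℝ) / frobSq (P3 - P1) : ℝ) • ((P3 - P1)ᴴ * (P3 * P4 - P1 * P2))))
          0 1
            (((N : ℝ) / frobSq (P3 - P1) : ℝ) • ((P3 - P1)ᴴ * (P3 * P4 - P1 * P2))) *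
          Abar N := by
  have hD : P3 - P1 ≠ 0 := sub_ne_zero.mpr (Ne.symm hne)
  have hNR : (N : ℝ) ≠ 0 := Nat.cast_ne_zero.mpr (by omega)
  have hc0 : frobSq (P3 - P1) ≠ 0 := by
    intro h
    apply hD
    have h1 := (Finset.sum_eq_zero_iff_of_nonneg
      (fun i _ => Finset.sum_nonneg fun j _ => Complex.normSq_nonneg _)).mp h
    ext i j
    have h2 := (Finset.sum_eq_zero_iff_of_nonneg
      (fun j _ => Complex.normSq_nonneg _)).mp (h1 i (Finset.mem_univ i)) j (Finset.mem_univ j)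
    simpa using Complex.normSq_eq_zero.mp h2
  set c : ℝ := frobSq (P3 - P1) with hcdef
  set X : Matrix (Fin N) (Fin N) ℂ := P3 * P4 - P1 * P2 with hXdef
  set E : Matrix (Fin N) (Fin N) ℂ := ((N : ℝ) / c) • (P3 - P1)ᴴ with hEdef
  set M2 : Matrix (Fin N) (Fin N) ℂ := ((N : ℝ) / c) • ((P3 - P1)ᴴ * X) with hM2def
  have hM2 : M2 = E * X := (smul_mul_assoc _ _ _).symm
  have hED : E * (P3 - P1) = 1 := by
    rw [hEdef, smul_mul_assoc, hcond, ← smul_assoc]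
    have : ((N : ℝ) / c) • (((c / (N : ℝ) : ℝ) : ℂ)) = (1 : ℂ) := by
      rw [Complex.real_smul, ← Complex.ofReal_mul]
      have : (N : ℝ) / c * (c / (N : ℝ)) = 1 := by field_simp
      rw [this, Complex.ofReal_one]
    rw [this, one_smul]
  have hDE : (P3 - P1) * E = 1 := mul_eq_one_comm.mp hED
  have hsub : P3 * E - P1 * E = 1 := by rw [← sub_mul, hDE]
  set H := blk22 (1 : Matrix (Fin N) (Fin N) ℂ) P1 1 P3 with hHdef
  set K := blk22 (P3 * E) (-(P1 * E)) (-E) E with hKdef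
  have hHK : H * K = 1 := by
    rw [hHdef, hKdef, blk22_mul_blk22]
    have e1 : (1 : Matrix (Fin N) (Fin N) ℂ) * (P3 * E) + P1 * -E = 1 := by
      rw [one_mul, mul_neg, ← sub_eq_add_neg, hsub]
    have e2 : (1 : Matrix (Fin N) (Fin N) ℂ) * -(P1 * E) + P1 * E = 0 := by
      rw [one_mul, neg_add_cancel]
    have e3 : (1 : Matrix (Fin N) (Fin N) ℂ) * (P3 * E) + P3 * -E = 0 := by
      rw [one_mul, mul_neg, add_neg_cancel]
    have e4 : (1 : Matrix (Fin N) (Fin N) ℂ) * -(P1 * E) + P3 * E = 1 := by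
      rw [one_mul, ← sub_eq_neg_add, hsub]
    rw [e1, e2, e3, e4, blk22_one]
  have hKH : K * H = 1 := mul_eq_one_comm.mp hHK
  have hU : IsUnit H := ⟨⟨H, K, hHK, hKH⟩, rfl⟩
  refine ⟨hU, ?_⟩
  set R := blk23 (1 : Matrix (Fin N) (Fin N) ℂ) 0 (P1 * P2 - P1 * M2) 0 1 M2 with hRdef
  have hDM2 : (P3 - P1) * M2 = X := by rw [hM2, ← mul_assoc, hDE, one_mul]
  have hHR : H * R = blk23 1 P1 (P1 * P2) 1 P3 (P3 * P4) := by
    rw [hHdef, hRdef, blk22_mul_blk23]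
    have f1 : (1 : Matrix (Fin N) (Fin N) ℂ) * 1 + P1 * 0 = 1 := by simp
    have f2 : (1 : Matrix (Fin N) (Fin N) ℂ) * 0 + P1 * 1 = P1 := by simp
    have f3 : (1 : Matrix (Fin N) (Fin N) ℂ) * (P1 * P2 - P1 * M2) + P1 * M2 = P1 * P2 := by
      rw [one_mul, sub_add_cancel]
    have f4 : (1 : Matrix (Fin N) (Fin N) ℂ) * 1 + P3 * 0 = 1 := by simp
    have f5 : (1 : Matrix (Fin N) (Fin N) ℂ) * 0 + P3 * 1 = P3 := by simp
    have f6 : (1 : Matrix (Fin N) (Fin N) ℂ) * (P1 * P2 - P1 * M2) + P3 * M2 = P3 * P4 := by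
      have h2 : P3 * P4 = P1 * P2 + (P3 - P1) * M2 := by rw [hDM2, hXdef]; abel
      rw [one_mul, h2, sub_mul]; abel
    rw [f1, f2, f3, f4, f5, f6]
  have hdet : IsUnit H.det := (Matrix.isUnit_iff_isUnit_det H).mp hU
  calc H⁻¹ * Gmat P1 P2 P3 P4 = H⁻¹ * (H * (R * Abar N)) := by
        rw [Gmat, ← hHR, Matrix.mul_assoc]
    _ = (H⁻¹ * H) * (R * Abar N) := (Matrix.mul_assoc _ _ _).symm
    _ = R * Abar N := by rw [Matrix.nonsing_inv_mul H hdet, Matrix.one_mul]
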